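/- Let $J$ be the ideal of adjacent $2$-minors of an $m\times n$ generic matrix over a field, with $m=4k+p$, $n=4l+q$, $0\le p,q<4$. Then $(\sqrt J)^{N}\not\subset J$ where $N=(k+\lfloor p/3\rfloor)(l+\lfloor q/3\rfloor)$; equivalently, $\mathrm{nilpot}(J)\geq N+1$. -/

import Mathlib

set_option maxHeartbeats 1000000
set_option synthInstance.maxHeartbeats 400000

open MvPolynomial

/-- The binomial edge ideal of a pair of graphs. -/
noncomputable def pairIdeal (K : Type) [Field K] {α β : Type}
    (G1 : SimpleGraph α) (G2 : SimpleGraph β) : Ideal (MvPolynomial (α × β) K) :=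
  Ideal.span {p | ∃ i j k l, G1.Adj i j ∧ G2.Adj k l ∧
    p = X (i, k) * X (j, l) - X (i, l) * X (j, k)}

namespace Stmt17Aux

variable (K : Type) [Field K]

/-- The auxiliary polynomial ring: two variables `s_z = X (z, false)`,
`t_z = X (z, true)` for every potential block `z : ℕ × ℕ`. -/
abbrev P9 := MvPolynomial ((ℕ × ℕ) × Bool) K

/-- Generators of the monomial ideal `(s_z t_z ^ 3, s_z ^ 3 t_z : z)`. -/
def Qset : Set (P9 K) :=
  {f | ∃ z : ℕ × ℕ, f = X (z, false) * X (z, true) ^ 3 ∨ f = X (z, false) ^ 3 * X (z, true)}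

noncomputable def QI : Ideal (P9 K) := Ideal.span (Qset K)

lemma XXmon (a b : (ℕ × ℕ) × Bool) (sa sb : ℕ) :
    (X a ^ sa * X b ^ sb : P9 K) = monomial (Finsupp.single a sa + Finsupp.single b sb) 1 := by
  rw [X_pow_eq_monomial, X_pow_eq_monomial, monomial_mul, one_mul]

/-- Any element of `QI` has vanishing coefficient on exponents bounded by 2. -/
lemma coeffQ (μ : ((ℕ × ℕ) × Bool) →₀ ℕ) (hμ : ∀ w, μ w ≤ 2) :
    ∀ f ∈ QI K, ∀ g : P9 K, coeff μ (g * f) = 0 := by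
  intro f hf
  induction hf using Submodule.span_induction with
  | mem x hx =>
      obtain ⟨z, hx | hx⟩ := hx <;> subst hx <;> intro g
      · rw [show (X ((z, false)) * X ((z, true)) ^ 3 : P9 K)
            = X ((z, false)) ^ 1 * X ((z, true)) ^ 3 from by ring, XXmon,
          coeff_mul_monomial', if_neg]
        intro hle
        have h3 := Finsupp.le_def.mp hle (z, true)
        have h4 := hμ (z, true)
        simp [Finsupp.single_apply] at h3
        omega
      · rw [show (X ((z, false)) ^ 3 * X ((z, true)) : P9 K)
            = X ((z, false)) ^ 3 * X ((z, true)) ^ 1 from by ring, XXmon,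
          coeff_mul_monomial', if_neg]
        intro hle
        have h3 := Finsupp.le_def.mp hle (z, false)
        have h4 := hμ (z, false)
        simp [Finsupp.single_apply] at h3
        omega
  | zero => intro g; rw [mul_zero, coeff_zero]
  | add x y hx hy px py => intro g; rw [mul_add, coeff_add, px g, py g, add_zero]
  | smul c x hx px => intro g; rw [smul_eq_mul, ← mul_assoc]; exact px (g * c)

/-- Exponents of `s` in the 3×3 witness block. -/
def ws : ℕ → ℕ → ℕ
  | 0, 0 => 0 | 0, 1 => 0 | 0, 2 => 0
  | 1, 0 => 1 | 1, 1 => 2 | 1, 2 => 2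
  | 2, 0 => 0 | 2, 1 => 1 | 2, 2 => 1
  | _, _ => 0

/-- Exponents of `t` in the 3×3 witness block. -/
def wt : ℕ → ℕ → ℕ
  | 0, 0 => 1 | 0, 1 => 1 | 0, 2 => 0
  | 1, 0 => 2 | 1, 1 => 2 | 1, 2 => 1
  | _, _ => 0

/-- The 3×3 table of monomial values of a block. -/
noncomputable def Ee (z : ℕ × ℕ) (r c : ℕ) : P9 K :=
  X (z, false) ^ ws r c * X (z, true) ^ wt r c

lemma memA (z : ℕ × ℕ) : Ee K z 0 0 * Ee K z 1 1 ∈ QI K := by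
  have h : Ee K z 0 0 * Ee K z 1 1
      = X ((z, false)) * (X ((z, false)) * X ((z, true)) ^ 3) := by
    simp only [Ee, ws, wt]; ring
  rw [h]
  exact Ideal.mul_mem_left _ _ (Ideal.subset_span ⟨z, Or.inl rfl⟩)

lemma memB (z : ℕ × ℕ) : Ee K z 0 1 * Ee K z 1 0 ∈ QI K := by
  have h : Ee K z 0 1 * Ee K z 1 0 = X ((z, false)) * X ((z, true)) ^ 3 := by
    simp only [Ee, ws, wt]; ring
  rw [h]
  exact Ideal.subset_span ⟨z, Or.inl rfl⟩

lemma memC (z : ℕ × ℕ) : Ee K z 1 1 * Ee K z 2 2 ∈ QI K := by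
  have h : Ee K z 1 1 * Ee K z 2 2
      = X ((z, true)) * (X ((z, false)) ^ 3 * X ((z, true))) := by
    simp only [Ee, ws, wt]; ring
  rw [h]
  exact Ideal.mul_mem_left _ _ (Ideal.subset_span ⟨z, Or.inr rfl⟩)

lemma memD (z : ℕ × ℕ) : Ee K z 1 2 * Ee K z 2 1 ∈ QI K := by
  have h : Ee K z 1 2 * Ee K z 2 1 = X ((z, false)) ^ 3 * X ((z, true)) := by
    simp only [Ee, ws, wt]; ring
  rw [h]
  exact Ideal.subset_span ⟨z, Or.inr rfl⟩

/-- The assignment of a value to the matrix entry at (row `i`, column `j`). -/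
noncomputable def gfun (a b : ℕ) (i j : ℕ) : P9 K ⧸ QI K :=
  if i % 4 < 3 ∧ i / 4 < a ∧ j % 4 < 3 ∧ j / 4 < b then
    Ideal.Quotient.mk (QI K) (Ee K (i / 4, j / 4) (i % 4) (j % 4)) else 0

lemma gfun_eval (a b i j r c dr dc : ℕ) (hi : i = 4 * r + dr) (hj : j = 4 * c + dc)
    (hr : r < a) (hc : c < b) (hdr : dr < 3) (hdc : dc < 3) :
    gfun K a b i j = Ideal.Quotient.mk (QI K) (Ee K (r, c) dr dc) := by
  subst hi hj
  have e1 : (4 * r + dr) % 4 = dr := by omega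
  have e2 : (4 * r + dr) / 4 = r := by omega
  have e3 : (4 * c + dc) % 4 = dc := by omega
  have e4 : (4 * c + dc) / 4 = c := by omega
  simp only [gfun, e1, e2, e3, e4]
  rw [if_pos ⟨hdr, hr, hdc, hc⟩]

/-- All adjacent 2×2 minors of the assignment vanish. -/
lemma minorZero (a b : ℕ) (i j c d : ℕ) (hij : i + 1 = j) (hcd : c + 1 = d) :
    gfun K a b i c * gfun K a b j d - gfun K a b i d * gfun K a b j c = 0 := by
  subst hij
  subst hcd
  by_cases hrow : i % 4 < 3 ∧ i / 4 < a
  swap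
  · have h1 : gfun K a b i c = 0 := by rw [gfun, if_neg]; tauto
    have h2 : gfun K a b i (c + 1) = 0 := by rw [gfun, if_neg]; tauto
    rw [h1, h2, zero_mul, zero_mul, sub_zero]
  by_cases hcol : c % 4 < 3 ∧ c / 4 < b
  swap
  · have h1 : gfun K a b i c = 0 := by rw [gfun, if_neg]; tauto
    have h2 : gfun K a b (i + 1) c = 0 := by rw [gfun, if_neg]; tauto
    rw [h1, h2, zero_mul, mul_zero, sub_zero]
  by_cases hr2 : i % 4 = 2
  · have e : (i + 1) % 4 = 3 := by omega
    have h1 : gfun K a b (i + 1) (c + 1) = 0 := by rw [gfun, if_neg]; omega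
    have h2 : gfun K a b (i + 1) c = 0 := by rw [gfun, if_neg]; omega
    rw [h1, h2, mul_zero, mul_zero, sub_zero]
  by_cases hc2 : c % 4 = 2
  · have e : (c + 1) % 4 = 3 := by omega
    have h1 : gfun K a b i (c + 1) = 0 := by rw [gfun, if_neg]; omega
    have h2 : gfun K a b (i + 1) (c + 1) = 0 := by rw [gfun, if_neg]; omega
    rw [h1, h2, mul_zero, zero_mul, sub_zero]
  -- All four entries lie in one block
  have G1 : gfun K a b i c
      = Ideal.Quotient.mk (QI K) (Ee K (i / 4, c / 4) (i % 4) (c % 4)) :=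
    gfun_eval K a b i c (i / 4) (c / 4) (i % 4) (c % 4) (by omega) (by omega)
      hrow.2 hcol.2 (by omega) (by omega)
  have G2 : gfun K a b (i + 1) (c + 1)
      = Ideal.Quotient.mk (QI K) (Ee K (i / 4, c / 4) (i % 4 + 1) (c % 4 + 1)) :=
    gfun_eval K a b (i + 1) (c + 1) (i / 4) (c / 4) (i % 4 + 1) (c % 4 + 1)
      (by omega) (by omega) hrow.2 hcol.2 (by omega) (by omega)
  have G3 : gfun K a b i (c + 1)
      = Ideal.Quotient.mk (QI K) (Ee K (i / 4, c / 4) (i % 4) (c % 4 + 1)) :=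
    gfun_eval K a b i (c + 1) (i / 4) (c / 4) (i % 4) (c % 4 + 1)
      (by omega) (by omega) hrow.2 hcol.2 (by omega) (by omega)
  have G4 : gfun K a b (i + 1) c
      = Ideal.Quotient.mk (QI K) (Ee K (i / 4, c / 4) (i % 4 + 1) (c % 4)) :=
    gfun_eval K a b (i + 1) c (i / 4) (c / 4) (i % 4 + 1) (c % 4)
      (by omega) (by omega) hrow.2 hcol.2 (by omega) (by omega)
  rw [G1, G2, G3, G4, ← map_mul, ← map_mul, ← map_sub,
    Ideal.Quotient.eq_zero_iff_mem]
  have hr01 : i % 4 = 0 ∨ i % 4 = 1 := by omega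
  have hc01 : c % 4 = 0 ∨ c % 4 = 1 := by omega
  rcases hr01 with hr | hr <;> rcases hc01 with hc | hc <;> rw [hr, hc]
  · exact sub_mem (memA K _) (memB K _)
  · rw [show Ee K (i / 4, c / 4) 0 1 * Ee K (i / 4, c / 4) (0 + 1) (1 + 1)
        = Ee K (i / 4, c / 4) 0 (1 + 1) * Ee K (i / 4, c / 4) (0 + 1) 1 from by
      simp only [Ee, ws, wt]; ring]
    rw [sub_self]
    exact zero_mem _
  · rw [show Ee K (i / 4, c / 4) 1 0 * Ee K (i / 4, c / 4) (1 + 1) (0 + 1)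
        = Ee K (i / 4, c / 4) 1 (0 + 1) * Ee K (i / 4, c / 4) (1 + 1) 0 from by
      simp only [Ee, ws, wt]; ring]
    rw [sub_self]
    exact zero_mem _
  · exact sub_mem (memC K _) (memD K _)

lemma prod_monomial {γ : Type} (s : Finset γ) (t : γ → (((ℕ × ℕ) × Bool) →₀ ℕ)) :
    (∏ z ∈ s, monomial (t z) (1 : K)) = monomial (∑ z ∈ s, t z) 1 := by
  classical
  induction s using Finset.induction with
  | empty => simp [monomial_zero']
  | insert _ _ hx ih =>
      rw [Finset.prod_insert hx, Finset.sum_insert hx, ih, monomial_mul, one_mul]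

end Stmt17Aux

open Stmt17Aux in
/-- For the ideal `J` of adjacent 2-minors of an `m × n` generic matrix (the binomial
edge ideal of the pair of path graphs), with `m = 4k + p`, `n = 4l + q`, `0 ≤ p,q < 4`,
one has `(√J)^N ⊄ J` for `N = (k + ⌊p/3⌋)(l + ⌊q/3⌋)`. -/
theorem stmt17 (K : Type) [Field K] (m n k l p q : ℕ)
    (hp : p < 4) (hq : q < 4) (hm : m = 4 * k + p) (hn : n = 4 * l + q) :
    ¬ ((pairIdeal K (SimpleGraph.pathGraph m) (SimpleGraph.pathGraph n)).radical ^
          ((k + p / 3) * (l + q / 3)) ≤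
        pairIdeal K (SimpleGraph.pathGraph m) (SimpleGraph.pathGraph n)) := by
  classical
  intro hle
  set J := pairIdeal K (SimpleGraph.pathGraph m) (SimpleGraph.pathGraph n) with hJ
  set a := k + p / 3 with ha
  set b := l + q / 3 with hb
  -- the evaluation algebra map
  set A : MvPolynomial (Fin m × Fin n) K →ₐ[K] (P9 K ⧸ QI K) :=
    aeval (fun x : Fin m × Fin n => gfun K a b x.1.1 x.2.1) with hA
  -- the generators of J all map to 0
  have hker : J ≤ RingHom.ker (A : MvPolynomial (Fin m × Fin n) K →+* (P9 K ⧸ QI K)) := by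
    rw [hJ, pairIdeal, Ideal.span_le]
    rintro f ⟨i, j, c, d, hij, hcd, rfl⟩
    rw [SetLike.mem_coe, RingHom.mem_ker]
    have hXa : ∀ (u : Fin m) (v : Fin n), A (X (u, v)) = gfun K a b u.1 v.1 :=
      fun u v => aeval_X _ _
    show A (X (i, c) * X (j, d) - X (i, d) * X (j, c)) = 0
    rw [map_sub, map_mul, map_mul, hXa, hXa, hXa, hXa]
    rw [SimpleGraph.pathGraph_adj] at hij hcd
    rcases hij with hij | hij <;> rcases hcd with hcd | hcd
    · exact minorZero K a b i.1 j.1 c.1 d.1 hij hcd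
    · linear_combination - minorZero K a b i.1 j.1 d.1 c.1 hij hcd
    · linear_combination - minorZero K a b j.1 i.1 c.1 d.1 hij hcd
    · linear_combination minorZero K a b j.1 i.1 d.1 c.1 hij hcd
  -- the blocks
  set B : Finset (ℕ × ℕ) := Finset.range a ×ˢ Finset.range b with hB
  -- the witness element for one block
  set V : ℕ × ℕ → MvPolynomial (Fin m × Fin n) K := fun z =>
    if h : 4 * z.1 + 2 < m ∧ 4 * z.2 + 2 < n then
      X (⟨4 * z.1, by omega⟩, ⟨4 * z.2, by omega⟩)
        * X (⟨4 * z.1 + 1, by omega⟩, ⟨4 * z.2 + 1, by omega⟩)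
        * X (⟨4 * z.1 + 2, h.1⟩, ⟨4 * z.2 + 2, h.2⟩)
      - X (⟨4 * z.1, by omega⟩, ⟨4 * z.2 + 2, h.2⟩)
        * X (⟨4 * z.1 + 1, by omega⟩, ⟨4 * z.2 + 1, by omega⟩)
        * X (⟨4 * z.1 + 2, h.1⟩, ⟨4 * z.2, by omega⟩)
    else 0 with hV
  have hBmem : ∀ z ∈ B, 4 * z.1 + 2 < m ∧ 4 * z.2 + 2 < n := by
    rintro ⟨z1, z2⟩ hz
    rw [hB, Finset.mem_product, Finset.mem_range, Finset.mem_range] at hz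
    constructor <;> omega
  -- each block element squares into J
  have hVrad : ∀ z ∈ B, V z ∈ J.radical := by
    intro z hz
    obtain ⟨h1, h2⟩ := hBmem z hz
    rw [Ideal.mem_radical_iff]
    refine ⟨2, ?_⟩
    rw [hV]
    simp only
    rw [dif_pos ⟨h1, h2⟩]
    set i0 : Fin m := ⟨4 * z.1, by omega⟩
    set i1 : Fin m := ⟨4 * z.1 + 1, by omega⟩
    set i2 : Fin m := ⟨4 * z.1 + 2, h1⟩
    set j0 : Fin n := ⟨4 * z.2, by omega⟩
    set j1 : Fin n := ⟨4 * z.2 + 1, by omega⟩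
    set j2 : Fin n := ⟨4 * z.2 + 2, h2⟩
    have adr1 : (SimpleGraph.pathGraph m).Adj i0 i1 :=
      SimpleGraph.pathGraph_adj.mpr (Or.inl rfl)
    have adr2 : (SimpleGraph.pathGraph m).Adj i1 i2 :=
      SimpleGraph.pathGraph_adj.mpr (Or.inl rfl)
    have adc1 : (SimpleGraph.pathGraph n).Adj j0 j1 :=
      SimpleGraph.pathGraph_adj.mpr (Or.inl rfl)
    have adc2 : (SimpleGraph.pathGraph n).Adj j1 j2 :=
      SimpleGraph.pathGraph_adj.mpr (Or.inl rfl)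
    have hd1 : (X (i0, j0) * X (i1, j1) - X (i0, j1) * X (i1, j0)) ∈ J :=
      Ideal.subset_span ⟨i0, i1, j0, j1, adr1, adc1, rfl⟩
    have hd2 : (X (i0, j1) * X (i1, j2) - X (i0, j2) * X (i1, j1)) ∈ J :=
      Ideal.subset_span ⟨i0, i1, j1, j2, adr1, adc2, rfl⟩
    have hd3 : (X (i1, j0) * X (i2, j1) - X (i1, j1) * X (i2, j0)) ∈ J :=
      Ideal.subset_span ⟨i1, i2, j0, j1, adr2, adc1, rfl⟩
    have hd4 : (X (i1, j1) * X (i2, j2) - X (i1, j2) * X (i2, j1)) ∈ J :=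
      Ideal.subset_span ⟨i1, i2, j1, j2, adr2, adc2, rfl⟩
    have key : (X (i0, j0) * X (i1, j1) * X (i2, j2)
          - X (i0, j2) * X (i1, j1) * X (i2, j0)) ^ 2
        = (X (i0, j0) * X (i1, j2) * X (i2, j1) * X (i2, j2)
              - X (i0, j2) * X (i1, j2) * X (i2, j0) * X (i2, j1))
            * (X (i0, j0) * X (i1, j1) - X (i0, j1) * X (i1, j0))
          + ((2 : MvPolynomial (Fin m × Fin n) K) * (X (i0, j0) * X (i1, j1) * X (i2, j0) * X (i2, j2))
              - X (i0, j2) * X (i1, j1) * X (i2, j0) ^ 2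
              - X (i0, j0) * X (i1, j2) * X (i2, j0) * X (i2, j1))
            * (X (i0, j1) * X (i1, j2) - X (i0, j2) * X (i1, j1))
          + (X (i0, j0) * X (i0, j1) * X (i1, j2) * X (i2, j2)
              - X (i0, j1) * X (i0, j2) * X (i1, j2) * X (i2, j0))
            * (X (i1, j0) * X (i2, j1) - X (i1, j1) * X (i2, j0))
          + (X (i0, j0) ^ 2 * X (i1, j1) * X (i2, j2)
              - X (i0, j0) * X (i0, j1) * X (i1, j2) * X (i2, j0))
            * (X (i1, j1) * X (i2, j2) - X (i1, j2) * X (i2, j1)) := by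
      ring
    rw [key]
    exact add_mem (add_mem (add_mem (Ideal.mul_mem_left _ _ hd1)
      (Ideal.mul_mem_left _ _ hd2)) (Ideal.mul_mem_left _ _ hd3))
      (Ideal.mul_mem_left _ _ hd4)
  -- the image of each block element
  have hAV : ∀ z ∈ B, A (V z)
      = Ideal.Quotient.mk (QI K)
          (X ((z, false)) ^ 3 * X ((z, true)) ^ 3
            - X ((z, false)) ^ 2 * X ((z, true)) ^ 2) := by
    intro z hz
    obtain ⟨h1, h2⟩ := hBmem z hz
    have hz1 : z.1 < a := by
      have := (Finset.mem_product.mp (hB ▸ hz)).1; simpa using this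
    have hz2 : z.2 < b := by
      have := (Finset.mem_product.mp (hB ▸ hz)).2; simpa using this
    have e9 : (X ((z, false)) ^ 3 * X ((z, true)) ^ 3
          - X ((z, false)) ^ 2 * X ((z, true)) ^ 2 : P9 K)
        = Ee K (z.1, z.2) 0 0 * Ee K (z.1, z.2) 1 1 * Ee K (z.1, z.2) 2 2
          - Ee K (z.1, z.2) 0 2 * Ee K (z.1, z.2) 1 1 * Ee K (z.1, z.2) 2 0 := by
      obtain ⟨z1, z2⟩ := z
      simp only [Ee, ws, wt]
      ring
    rw [e9, hV]
    simp only
    rw [dif_pos ⟨h1, h2⟩]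
    simp only [map_sub, map_mul, hA, aeval_X]
    have q00 : gfun K a b (4 * z.1) (4 * z.2)
        = Ideal.Quotient.mk (QI K) (Ee K (z.1, z.2) 0 0) :=
      gfun_eval K a b _ _ z.1 z.2 0 0 (by omega) (by omega) hz1 hz2 (by omega) (by omega)
    have q11 : gfun K a b (4 * z.1 + 1) (4 * z.2 + 1)
        = Ideal.Quotient.mk (QI K) (Ee K (z.1, z.2) 1 1) :=
      gfun_eval K a b _ _ z.1 z.2 1 1 (by omega) (by omega) hz1 hz2 (by omega) (by omega)
    have q22 : gfun K a b (4 * z.1 + 2) (4 * z.2 + 2)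
        = Ideal.Quotient.mk (QI K) (Ee K (z.1, z.2) 2 2) :=
      gfun_eval K a b _ _ z.1 z.2 2 2 (by omega) (by omega) hz1 hz2 (by omega) (by omega)
    have q02 : gfun K a b (4 * z.1) (4 * z.2 + 2)
        = Ideal.Quotient.mk (QI K) (Ee K (z.1, z.2) 0 2) :=
      gfun_eval K a b _ _ z.1 z.2 0 2 (by omega) (by omega) hz1 hz2 (by omega) (by omega)
    have q20 : gfun K a b (4 * z.1 + 2) (4 * z.2)
        = Ideal.Quotient.mk (QI K) (Ee K (z.1, z.2) 2 0) :=
      gfun_eval K a b _ _ z.1 z.2 2 0 (by omega) (by omega) hz1 hz2 (by omega) (by omega)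
    rw [q00, q11, q22, q02, q20]
  -- assemble: the product of all block elements
  set u : MvPolynomial (Fin m × Fin n) K := ∏ z ∈ B, V z with hu
  have huradpow : u ∈ J.radical ^ (a * b) := by
    have h1 : u ∈ ∏ _z ∈ B, J.radical := Ideal.prod_mem_prod hVrad
    rwa [Finset.prod_const, hB, Finset.card_product, Finset.card_range,
      Finset.card_range] at h1
  have huJ : u ∈ J := hle huradpow
  have hAu0 : A u = 0 := hker huJ
  -- compute A u explicitly
  set P : P9 K := ∏ z ∈ B,
      (X ((z, false)) ^ 3 * X ((z, true)) ^ 3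
        - X ((z, false)) ^ 2 * X ((z, true)) ^ 2) with hP
  have hAu : A u = Ideal.Quotient.mk (QI K) P := by
    rw [hu, map_prod, hP, map_prod]
    exact Finset.prod_congr rfl hAV
  have hPQI : P ∈ QI K := by
    rw [← Ideal.Quotient.eq_zero_iff_mem, ← hAu, hAu0]
  -- the distinguished exponent
  set μ : ((ℕ × ℕ) × Bool) →₀ ℕ :=
    ∑ z ∈ B, (Finsupp.single ((z, false) : (ℕ × ℕ) × Bool) 2
      + Finsupp.single ((z, true) : (ℕ × ℕ) × Bool) 2) with hμdef
  have hμ : ∀ w, μ w ≤ 2 := by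
    rintro ⟨zw, bw⟩
    rw [hμdef]
    rw [Finsupp.finset_sum_apply]
    have hterm : ∀ z ∈ B,
        ((Finsupp.single ((z, false) : (ℕ × ℕ) × Bool) 2
          + Finsupp.single ((z, true) : (ℕ × ℕ) × Bool) 2) : ((ℕ × ℕ) × Bool) →₀ ℕ) (zw, bw)
        = if z = zw then 2 else 0 := by
      intro z _
      cases bw <;>
        simp [Finsupp.single_apply, Prod.ext_iff]
    rw [Finset.sum_congr rfl hterm, Finset.sum_ite_eq']
    split_ifs <;> omega
  -- coefficient of μ in P is (-1)^|B|
  have hPfac : P = monomial μ 1 * ∏ z ∈ B, (X ((z, false)) * X ((z, true)) - 1 : P9 K) := by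
    rw [hP, ← prod_monomial K B
      (fun z => Finsupp.single ((z, false) : (ℕ × ℕ) × Bool) 2
        + Finsupp.single ((z, true) : (ℕ × ℕ) × Bool) 2), ← Finset.prod_mul_distrib]
    refine Finset.prod_congr rfl fun z _ => ?_
    rw [← XXmon]
    ring
  have hcoeff : coeff μ P = (-1 : K) ^ B.card := by
    rw [hPfac, coeff_monomial_mul', if_pos le_rfl, one_mul, tsub_self]
    have : coeff (0 : ((ℕ × ℕ) × Bool) →₀ ℕ)
        (∏ z ∈ B, (X ((z, false)) * X ((z, true)) - 1 : P9 K))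
        = constantCoeff (∏ z ∈ B, (X ((z, false)) * X ((z, true)) - 1 : P9 K)) := rfl
    rw [this, map_prod]
    have : ∀ z ∈ B, constantCoeff (X ((z, false)) * X ((z, true)) - 1 : P9 K) = -1 := by
      intro z _
      rw [map_sub, map_mul, constantCoeff_X, constantCoeff_X, map_one]
      ring
    rw [Finset.prod_congr rfl this, Finset.prod_const]
  have hzero : coeff μ P = 0 := by
    have := coeffQ K μ hμ P hPQI 1
    rwa [one_mul] at this
  rw [hcoeff] at hzero
  exact pow_ne_zero _ (neg_ne_zero.mpr one_ne_zero) hzero
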